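/- Let (A, ∙, h) be a Euclidean metrized commutative algebra with an h-orthogonal decomposition A = A₁ ⊕ A₂ into ideals. If both (A₁, ∙, h) and (A₂, ∙, h) have nonnegative (resp. nonpositive) sectional nonassociativity, then so does (A, ∙, h). -/

import Mathlib

/-- For a Euclidean metrized commutative algebra decomposing as an orthogonal direct sum
of ideals, nonnegative (resp. nonpositive) sectional nonassociativity of both summands
implies nonnegative (resp. nonpositive) sectional nonassociativity of the whole algebra.
(For a commutative algebra, nonnegative sectional nonassociativity is equivalent to
`h(x∙x, y∙y) ≥ |x∙y|²` for all `x, y`, and similarly for nonpositive.) -/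
theorem sect_direct_sum
    {A : Type*} [AddCommGroup A] [Module ℝ A]
    (mul : A →ₗ[ℝ] A →ₗ[ℝ] A)
    (hcomm : ∀ x y : A, mul x y = mul y x)
    (h : A →ₗ[ℝ] A →ₗ[ℝ] ℝ)
    (hsymm : ∀ x y : A, h x y = h y x)
    (hpos : ∀ x : A, x ≠ 0 → 0 < h x x)
    (hinv : ∀ x y z : A, h (mul x y) z = h x (mul y z))
    (A₁ A₂ : Submodule ℝ A)
    (hcompl : IsCompl A₁ A₂)
    (hid1 : ∀ a ∈ A₁, ∀ x : A, mul x a ∈ A₁)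
    (hid2 : ∀ a ∈ A₂, ∀ x : A, mul x a ∈ A₂)
    (horth : ∀ a ∈ A₁, ∀ b ∈ A₂, h a b = 0) :
    ((∀ x ∈ A₁, ∀ y ∈ A₁, h (mul x y) (mul x y) ≤ h (mul x x) (mul y y)) →
     (∀ x ∈ A₂, ∀ y ∈ A₂, h (mul x y) (mul x y) ≤ h (mul x x) (mul y y)) →
     ∀ x y : A, h (mul x y) (mul x y) ≤ h (mul x x) (mul y y)) ∧
    ((∀ x ∈ A₁, ∀ y ∈ A₁, h (mul x x) (mul y y) ≤ h (mul x y) (mul x y)) →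
     (∀ x ∈ A₂, ∀ y ∈ A₂, h (mul x x) (mul y y) ≤ h (mul x y) (mul x y)) →
     ∀ x y : A, h (mul x x) (mul y y) ≤ h (mul x y) (mul x y)) := by
  -- cross products vanish
  have hzero : ∀ a ∈ A₁, ∀ b ∈ A₂, mul a b = 0 := by
    intro a ha b hb
    have h1 : mul a b ∈ A₁ := by rw [hcomm]; exact hid1 a ha b
    have h2 : mul a b ∈ A₂ := hid2 b hb a
    exact (Submodule.disjoint_def.mp hcompl.disjoint) _ h1 h2
  have hmul : ∀ x₁ ∈ A₁, ∀ x₂ ∈ A₂, ∀ y₁ ∈ A₁, ∀ y₂ ∈ A₂,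
      mul (x₁ + x₂) (y₁ + y₂) = mul x₁ y₁ + mul x₂ y₂ := by
    intro x₁ hx₁ x₂ hx₂ y₁ hy₁ y₂ hy₂
    have e1 : mul x₁ y₂ = 0 := hzero x₁ hx₁ y₂ hy₂
    have e2 : mul x₂ y₁ = 0 := by rw [hcomm]; exact hzero y₁ hy₁ x₂ hx₂
    simp [map_add, e1, e2]
  have hpair : ∀ u₁ ∈ A₁, ∀ u₂ ∈ A₂, ∀ v₁ ∈ A₁, ∀ v₂ ∈ A₂,
      h (u₁ + u₂) (v₁ + v₂) = h u₁ v₁ + h u₂ v₂ := by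
    intro u₁ hu₁ u₂ hu₂ v₁ hv₁ v₂ hv₂
    have e1 : h u₁ v₂ = 0 := horth u₁ hu₁ v₂ hv₂
    have e2 : h u₂ v₁ = 0 := by rw [hsymm]; exact horth v₁ hv₁ u₂ hu₂
    simp [map_add, e1, e2]
  have key : ∀ x y : A, ∃ x₁ ∈ A₁, ∃ x₂ ∈ A₂, ∃ y₁ ∈ A₁, ∃ y₂ ∈ A₂,
      h (mul x y) (mul x y) = h (mul x₁ y₁) (mul x₁ y₁) + h (mul x₂ y₂) (mul x₂ y₂) ∧
      h (mul x x) (mul y y) = h (mul x₁ x₁) (mul y₁ y₁) + h (mul x₂ x₂) (mul y₂ y₂) := by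
    intro x y
    obtain ⟨x₁, x₂, hx₁, hx₂, hx⟩ := Submodule.codisjoint_iff_exists_add_eq.mp hcompl.codisjoint x
    obtain ⟨y₁, y₂, hy₁, hy₂, hy⟩ := Submodule.codisjoint_iff_exists_add_eq.mp hcompl.codisjoint y
    refine ⟨x₁, hx₁, x₂, hx₂, y₁, hy₁, y₂, hy₂, ?_, ?_⟩
    · rw [← hx, ← hy, hmul x₁ hx₁ x₂ hx₂ y₁ hy₁ y₂ hy₂]
      exact hpair _ (hid1 y₁ hy₁ x₁) _ (hid2 y₂ hy₂ x₂) _ (hid1 y₁ hy₁ x₁) _ (hid2 y₂ hy₂ x₂)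
    · rw [← hx, ← hy, hmul x₁ hx₁ x₂ hx₂ x₁ hx₁ x₂ hx₂, hmul y₁ hy₁ y₂ hy₂ y₁ hy₁ y₂ hy₂]
      exact hpair _ (hid1 x₁ hx₁ x₁) _ (hid2 x₂ hx₂ x₂) _ (hid1 y₁ hy₁ y₁) _ (hid2 y₂ hy₂ y₂)
  constructor
  · intro H1 H2 x y
    obtain ⟨x₁, hx₁, x₂, hx₂, y₁, hy₁, y₂, hy₂, e1, e2⟩ := key x y
    rw [e1, e2]
    exact add_le_add (H1 x₁ hx₁ y₁ hy₁) (H2 x₂ hx₂ y₂ hy₂)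
  · intro H1 H2 x y
    obtain ⟨x₁, hx₁, x₂, hx₂, y₁, hy₁, y₂, hy₂, e1, e2⟩ := key x y
    rw [e1, e2]
    exact add_le_add (H1 x₁ hx₁ y₁ hy₁) (H2 x₂ hx₂ y₂ hy₂)
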